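/- For every n ≥ 1 and every c with 0 ≤ c ≤ 1, the Lebesgue measure of the hyperspherical cap {x ∈ ℝⁿ : |x| ≤ 1 and x₁ ≥ c} equals (π^{n/2} / (2 Γ(n/2 + 1))) · I_{1−c²}((n+1)/2, 1/2). -/

import Mathlib

open MeasureTheory Metric Filter Topology Real

/-- The incomplete Beta function `B_x(a, b) = ∫₀ˣ t^(a-1) (1-t)^(b-1) dt`. -/
noncomputable def incBeta (x a b : ℝ) : ℝ :=
  ∫ t in (0 : ℝ)..x, t ^ (a - 1) * (1 - t) ^ (b - 1)

/-- The (complete) Beta function `B(a, b) = Γ(a)Γ(b)/Γ(a+b)`. -/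
noncomputable def betaFn (a b : ℝ) : ℝ :=
  Real.Gamma a * Real.Gamma b / Real.Gamma (a + b)

/-- The regularized incomplete Beta function `I_x(a, b) = B_x(a,b)/B(a,b)`. -/
noncomputable def regIncBeta (x a b : ℝ) : ℝ :=
  incBeta x a b / betaFn a b

lemma volA (m : ℕ) {r : ℝ} (hr : 0 ≤ r) :
    volume {z : Fin m → ℝ | ∑ i, z i ^ 2 ≤ r ^ 2} =
      ENNReal.ofReal (Real.sqrt π ^ m / Real.Gamma ((m : ℝ) / 2 + 1) * r ^ m) := by
  rcases Nat.eq_zero_or_pos m with hm | hm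
  · subst hm
    simp only [Finset.univ_eq_empty, Finset.sum_empty, pow_zero]
    have : {z : Fin 0 → ℝ | (0:ℝ) ≤ r ^ 2} = Set.univ := by
      ext z; simp [sq_nonneg]
    rw [this]
    simp [MeasureTheory.volume_pi, MeasureTheory.Measure.pi_univ, Real.Gamma_one]
  · have : Nonempty (Fin m) := ⟨⟨0, hm⟩⟩
    have key := (EuclideanSpace.volume_preserving_symm_measurableEquiv_toLp (Fin m)).measure_preimage
      (s := {z : Fin m → ℝ | ∑ i, z i ^ 2 ≤ r ^ 2}) ?_
    · rw [← key]
      have : (MeasurableEquiv.toLp 2 (Fin m → ℝ)).symm ⁻¹' {z : Fin m → ℝ | ∑ i, z i ^ 2 ≤ r ^ 2}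
          = Metric.closedBall (0 : EuclideanSpace ℝ (Fin m)) r := by
        ext x
        simp only [Set.mem_preimage, Set.mem_setOf_eq, Metric.mem_closedBall, dist_zero_right]
        rw [EuclideanSpace.norm_eq]
        constructor
        · intro h
          calc Real.sqrt (∑ i, ‖x i‖ ^ 2) ≤ Real.sqrt (r ^ 2) := by
                apply Real.sqrt_le_sqrt; simpa [sq_abs] using h
            _ = r := Real.sqrt_sq hr
        · intro h
          have h2 : (∑ i, ‖x i‖ ^ 2) ≤ r ^ 2 := by
            have := Real.sq_sqrt (by positivity : (0:ℝ) ≤ ∑ i, ‖x i‖ ^ 2)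
            nlinarith [Real.sqrt_nonneg (∑ i, ‖x i‖ ^ 2)]
          simpa [sq_abs] using h2
      rw [this, EuclideanSpace.volume_closedBall]
      rw [ENNReal.ofReal_mul (by positivity), mul_comm, ENNReal.ofReal_pow hr]
      simp [Fintype.card_fin]
    · apply MeasurableSet.nullMeasurableSet
      apply measurableSet_le
      · exact Finset.measurable_sum _ (fun i _ => ((measurable_pi_apply i).pow_const 2))
      · exact measurable_const

lemma substKey (m : ℕ) {c : ℝ} (hc0 : 0 ≤ c) (hc1 : c ≤ 1) :
    (∫ t in (0:ℝ)..(1 - c ^ 2), t ^ ((((m:ℝ)+2)/2) - 1) * (1 - t) ^ ((1:ℝ)/2 - 1))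
      = 2 * ∫ s in Set.Ioo c 1, (1 - s ^ 2) ^ ((m:ℝ)/2) := by
  have h0 : (0:ℝ) ≤ 1 - c ^ 2 := by nlinarith
  rw [intervalIntegral.integral_of_le h0, MeasureTheory.integral_Ioc_eq_integral_Ioo]
  have himg : (fun s : ℝ => 1 - s ^ 2) '' Set.Ioo c 1 = Set.Ioo 0 (1 - c ^ 2) := by
    ext t
    constructor
    · rintro ⟨s, ⟨hs1, hs2⟩, rfl⟩
      dsimp only
      constructor <;> nlinarith
    · rintro ⟨ht0, ht1⟩
      have h1t : 0 ≤ 1 - t := by nlinarith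
      refine ⟨Real.sqrt (1 - t), ⟨?_, ?_⟩, ?_⟩
      · have : c = Real.sqrt (c ^ 2) := (Real.sqrt_sq hc0).symm
        rw [this]
        exact Real.sqrt_lt_sqrt (by positivity) (by nlinarith)
      · have : Real.sqrt (1 - t) < Real.sqrt 1 := Real.sqrt_lt_sqrt h1t (by nlinarith)
        simpa using this
      · dsimp only
        rw [Real.sq_sqrt h1t]; ring
  rw [← himg]
  have hderiv : ∀ x ∈ Set.Ioo c 1, HasDerivWithinAt (fun s : ℝ => 1 - s ^ 2)
      (-(2 * x)) (Set.Ioo c 1) x := by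
    intro x _
    have := ((hasDerivAt_pow 2 x).const_sub 1).hasDerivWithinAt (s := Set.Ioo c 1)
    simpa using this
  have hinj : Set.InjOn (fun s : ℝ => 1 - s ^ 2) (Set.Ioo c 1) := by
    intro a ha b hb h
    simp only at h
    have h2 : (a - b) * (a + b) = 0 := by nlinarith
    rcases mul_eq_zero.1 h2 with h3 | h3
    · linarith
    · exfalso; rcases ha with ⟨ha1, _⟩; rcases hb with ⟨hb1, _⟩; linarith
  rw [MeasureTheory.integral_image_eq_integral_abs_deriv_smul measurableSet_Ioo hderiv hinj]
  rw [← MeasureTheory.integral_const_mul]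
  apply MeasureTheory.setIntegral_congr_fun measurableSet_Ioo
  intro x hx
  rcases hx with ⟨hx1, hx2⟩
  have hx0 : 0 < x := lt_of_le_of_lt hc0 hx1
  have h1x : 0 ≤ 1 - x ^ 2 := by nlinarith
  simp only [smul_eq_mul, abs_neg, abs_mul]
  rw [abs_of_pos hx0]
  have e1 : (1 - (1 - x ^ 2)) = x ^ 2 := by ring
  rw [e1]
  have e2 : (x ^ 2 : ℝ) ^ ((1:ℝ)/2 - 1) = x⁻¹ := by
    rw [← Real.rpow_natCast x 2, ← Real.rpow_mul hx0.le]
    norm_num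
    rw [Real.rpow_neg_one]
  have e3 : ((((m:ℝ)+2)/2) - 1) = (m:ℝ)/2 := by ring
  rw [e2, e3]
  have : |(2:ℝ)| = 2 := by norm_num
  rw [this]
  field_simp

theorem main
    {n : ℕ} (hn : 1 ≤ n) (c : ℝ) (hc0 : 0 ≤ c) (hc1 : c ≤ 1) :
    (volume {x : EuclideanSpace ℝ (Fin n) | ‖x‖ ≤ 1 ∧ c ≤ x ⟨0, hn⟩}).toReal =
      Real.sqrt π ^ (n-1) / Real.Gamma (((n:ℝ)-1) / 2 + 1) *
        ∫ t in Set.Icc c 1, Real.sqrt (1 - t ^ 2) ^ (n-1) := by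
  obtain ⟨m, rfl⟩ : ∃ m, n = m + 1 := ⟨n - 1, (Nat.succ_pred_eq_of_pos hn).symm⟩
  set V : ℝ := Real.sqrt π ^ m / Real.Gamma ((m : ℝ) / 2 + 1) with hV
  have hVpos : 0 < V := by
    apply div_pos (by positivity)
    exact Real.Gamma_pos_of_pos (by positivity)
  set Q : Set (ℝ × (Fin m → ℝ)) :=
    {p | p.1 ^ 2 + ∑ i, p.2 i ^ 2 ≤ 1 ∧ c ≤ p.1} with hQdef
  have hQ : MeasurableSet Q := by
    have : Q = {p : ℝ × (Fin m → ℝ) | p.1 ^ 2 + ∑ i, p.2 i ^ 2 ≤ 1} ∩ {p | c ≤ p.1} := rfl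
    rw [this]
    exact (measurableSet_le ((measurable_fst.pow_const 2).add
        (Finset.measurable_sum _ fun i _ =>
          ((measurable_pi_apply i).comp measurable_snd).pow_const 2)) measurable_const).inter
      (measurableSet_le measurable_const measurable_fst)
  -- Step 1+2 : volume S = volume Q
  have hstep12 : volume {x : EuclideanSpace ℝ (Fin (m+1)) | ‖x‖ ≤ 1 ∧ c ≤ x ⟨0, hn⟩} = volume Q := by
    set P : Set (Fin (m+1) → ℝ) := {y | ∑ i, y i ^ 2 ≤ 1 ∧ c ≤ y 0} with hPdef
    have h1 : {x : EuclideanSpace ℝ (Fin (m+1)) | ‖x‖ ≤ 1 ∧ c ≤ x ⟨0, hn⟩}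
        = (MeasurableEquiv.toLp 2 (Fin (m+1) → ℝ)).symm ⁻¹' P := by
      ext x
      simp only [Set.mem_setOf_eq, Set.mem_preimage, hPdef]
      have hsum : ∀ i, (MeasurableEquiv.toLp 2 (Fin (m+1) → ℝ)).symm x i = x i := fun _ => rfl
      simp only [hsum]
      have h00 : (⟨0, hn⟩ : Fin (m+1)) = 0 := rfl
      rw [h00]
      constructor
      · rintro ⟨h, h'⟩
        refine ⟨?_, by simpa [Fin.mk_zero] using h'⟩
        rw [EuclideanSpace.norm_eq] at h
        have h2 : (∑ i, ‖x i‖ ^ 2) ≤ 1 ^ 2 := by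
          have := Real.sq_sqrt (by positivity : (0:ℝ) ≤ ∑ i, ‖x i‖ ^ 2)
          nlinarith [Real.sqrt_nonneg (∑ i, ‖x i‖ ^ 2)]
        simpa [sq_abs] using h2
      · rintro ⟨h, h'⟩
        refine ⟨?_, by simpa [Fin.mk_zero] using h'⟩
        rw [EuclideanSpace.norm_eq]
        calc Real.sqrt (∑ i, ‖x i‖ ^ 2) ≤ Real.sqrt 1 := by
              apply Real.sqrt_le_sqrt; simpa [sq_abs] using h
          _ = 1 := Real.sqrt_one
    have hPmeas : MeasurableSet P := by
      apply MeasurableSet.inter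
      · exact measurableSet_le
          (Finset.measurable_sum _ fun i _ => (measurable_pi_apply i).pow_const 2) measurable_const
      · exact measurableSet_le measurable_const (measurable_pi_apply 0)
    rw [h1, (EuclideanSpace.volume_preserving_symm_measurableEquiv_toLp (Fin (m+1))).measure_preimage
      hPmeas.nullMeasurableSet]
    have h2 : P = (MeasurableEquiv.piFinSuccAbove (fun _ : Fin (m+1) => ℝ) 0) ⁻¹' Q := by
      ext y
      simp only [Set.mem_setOf_eq, Set.mem_preimage, hPdef, hQdef,
        MeasurableEquiv.piFinSuccAbove]
      have : ∑ i : Fin (m+1), y i ^ 2 = y 0 ^ 2 + ∑ i : Fin m, y (Fin.succAbove 0 i) ^ 2 :=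
        Fin.sum_univ_succAbove (fun i => y i ^ 2) 0
      rw [this]
      rfl
    rw [h2, (MeasureTheory.volume_preserving_piFinSuccAbove (fun _ : Fin (m+1) => ℝ) 0).measure_preimage
      hQ.nullMeasurableSet]
  -- Step 3 : slice
  have hslice : ∀ t : ℝ, volume (Prod.mk t ⁻¹' Q) =
      Set.indicator (Set.Icc c 1) (fun t => ENNReal.ofReal (V * Real.sqrt (1 - t ^ 2) ^ m)) t := by
    intro t
    by_cases ht : t ∈ Set.Icc c 1
    · rw [Set.indicator_of_mem ht]
      obtain ⟨htc, ht1⟩ := ht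
      have h1t : (0:ℝ) ≤ 1 - t ^ 2 := by nlinarith
      have hpre : Prod.mk t ⁻¹' Q = {z : Fin m → ℝ | ∑ i, z i ^ 2 ≤ Real.sqrt (1 - t ^ 2) ^ 2} := by
        ext z
        simp only [Set.mem_preimage, Set.mem_setOf_eq, hQdef]
        rw [Real.sq_sqrt h1t]
        constructor
        · rintro ⟨h, _⟩; linarith
        · intro h; exact ⟨by linarith, htc⟩
      rw [hpre, volA m (Real.sqrt_nonneg _), mul_comm V]
    · rw [Set.indicator_of_notMem ht]
      have hpre : Prod.mk t ⁻¹' Q = ∅ := by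
        ext z
        simp only [Set.mem_preimage, Set.mem_setOf_eq, hQdef, Set.mem_empty_iff_false,
          iff_false, not_and]
        rw [Set.mem_Icc] at ht
        push_neg at ht
        intro h1 h2
        have hz : (0:ℝ) ≤ ∑ i, z i ^ 2 := by positivity
        rcases le_or_gt c t with h3 | h3
        · have := ht h3; nlinarith
        · linarith
      rw [hpre, measure_empty]
  -- integrability
  have hcont : Continuous fun t : ℝ => V * Real.sqrt (1 - t ^ 2) ^ m :=
    continuous_const.mul (((continuous_const.sub (continuous_pow 2)).sqrt).pow m)
  have hint : IntegrableOn (fun t : ℝ => V * Real.sqrt (1 - t ^ 2) ^ m) (Set.Icc c 1) volume :=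
    hcont.integrableOn_Icc
  have hnn : 0 ≤ᵐ[volume.restrict (Set.Icc c 1)] fun t : ℝ => V * Real.sqrt (1 - t ^ 2) ^ m := by
    filter_upwards with t
    positivity
  have hstep3 : volume Q = ENNReal.ofReal (∫ t in Set.Icc c 1, V * Real.sqrt (1 - t ^ 2) ^ m) := by
    rw [MeasureTheory.Measure.volume_eq_prod, MeasureTheory.Measure.prod_apply hQ]
    calc (∫⁻ t, volume (Prod.mk t ⁻¹' Q))
        = ∫⁻ t, Set.indicator (Set.Icc c 1)
            (fun t => ENNReal.ofReal (V * Real.sqrt (1 - t ^ 2) ^ m)) t :=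
          lintegral_congr hslice
      _ = ∫⁻ t in Set.Icc c 1, ENNReal.ofReal (V * Real.sqrt (1 - t ^ 2) ^ m) :=
          lintegral_indicator measurableSet_Icc _
      _ = ENNReal.ofReal (∫ t in Set.Icc c 1, V * Real.sqrt (1 - t ^ 2) ^ m) :=
          (MeasureTheory.ofReal_integral_eq_lintegral_ofReal hint hnn).symm
  rw [hstep12, hstep3, ENNReal.toReal_ofReal (by
    apply MeasureTheory.integral_nonneg
    intro t; positivity)]
  rw [MeasureTheory.integral_const_mul]
  have : ((m:ℝ) + 1 - 1) / 2 + 1 = (m:ℝ)/2 + 1 := by ring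
  push_cast
  rw [this]

theorem volume_hyperspherical_cap
    {n : ℕ} (hn : 1 ≤ n) (c : ℝ) (hc0 : 0 ≤ c) (hc1 : c ≤ 1) :
    (volume {x : EuclideanSpace ℝ (Fin n) | ‖x‖ ≤ 1 ∧ c ≤ x ⟨0, hn⟩}).toReal =
      Real.pi ^ ((n : ℝ) / 2) / (2 * Real.Gamma ((n : ℝ) / 2 + 1)) *
        regIncBeta (1 - c ^ 2) (((n : ℝ) + 1) / 2) (1 / 2) := by
  obtain ⟨m, rfl⟩ : ∃ m, n = m + 1 := ⟨n - 1, (Nat.succ_pred_eq_of_pos hn).symm⟩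
  rw [main hn c hc0 hc1]
  have hG2 : 0 < Real.Gamma ((m:ℝ)/2 + 1) := Real.Gamma_pos_of_pos (by positivity)
  have hG1 : 0 < Real.Gamma (((m+1:ℕ):ℝ)/2 + 1) := Real.Gamma_pos_of_pos (by positivity)
  set J := ∫ t in Set.Ioo c 1, (1 - t^2) ^ ((m:ℝ)/2) with hJ
  have hIcc : (∫ t in Set.Icc c 1, Real.sqrt (1 - t ^ 2) ^ (m+1-1)) = J := by
    rw [hJ, Nat.add_sub_cancel, MeasureTheory.integral_Icc_eq_integral_Ioo]
    apply MeasureTheory.setIntegral_congr_fun measurableSet_Ioo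
    rintro t ⟨ht1, ht2⟩
    have h1t : (0:ℝ) ≤ 1 - t ^ 2 := by nlinarith
    dsimp only
    rw [Real.sqrt_eq_rpow, ← Real.rpow_natCast ((1 - t^2) ^ ((1:ℝ)/2)) m,
      ← Real.rpow_mul h1t]
    congr 1
    ring
  have ea : ((((m+1:ℕ)):ℝ) + 1)/2 = ((m:ℝ)+2)/2 := by push_cast; ring
  have hBeta : incBeta (1 - c^2) ((((m+1:ℕ):ℝ) + 1)/2) (1/2) = 2 * J := by
    unfold incBeta
    rw [ea]
    exact substKey m hc0 hc1
  unfold regIncBeta betaFn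
  rw [hIcc, hBeta, ea, Real.Gamma_one_half_eq]
  have e2 : ((m:ℝ)+2)/2 + 1/2 = ((m+1:ℕ):ℝ)/2 + 1 := by push_cast; ring
  have e1 : ((m:ℝ)+2)/2 = (m:ℝ)/2 + 1 := by ring
  rw [e2, e1]
  have e3 : (((m+1:ℕ):ℝ)-1)/2 + 1 = (m:ℝ)/2 + 1 := by push_cast; ring
  rw [e3, Nat.add_sub_cancel]
  have hπ : π ^ (((m+1:ℕ):ℝ)/2) = Real.sqrt π ^ (m+1) := by
    have h : (((m+1:ℕ):ℝ))/2 = (1/2) * (((m+1:ℕ):ℝ)) := by ring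
    rw [h, Real.rpow_mul Real.pi_pos.le, Real.rpow_natCast, Real.sqrt_eq_rpow]
  rw [hπ]
  have hsπ : (0:ℝ) < Real.sqrt π := Real.sqrt_pos.mpr Real.pi_pos
  rw [pow_succ]
  field_simp
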